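/- Let (a_n)_{n≥1} be the sequence of natural numbers defined by a_1 = 3 and a_{n+1} = 2a_n + ⌈a_n/2⌉ (the recursion satisfied by the chromatic numbers χ(C_{2k+1}^n) of OR powers of odd cycles with k ≥ 2). Then for all n ≥ 1, 3·(5/2)^{n−1} ≤ a_n ≤ (10·(5/2)^{n−1} − 1)/3, and consequently the multiplicative gain η_n = 3^n / a_n of the recursive coloring over the greedy coloring (which uses (χ(C_{2k+1}))^n = 3^n colors) satisfies η_n ≥ (9/10)·(6/5)^{n−1} and tends to infinity as n → ∞. -/
import Mathlib


/-- For the sequence `a 1 = 3`, `a (n+1) = 2·a n + ⌈a n / 2⌉` (the recursion of the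
chromatic numbers of OR powers of odd cycles; in `ℕ`, `⌈m/2⌉ = (m+1)/2`), one has
`3·(5/2)^{n−1} ≤ a n ≤ (10·(5/2)^{n−1} − 1)/3` for `n ≥ 1`; consequently the gain
`η_n = 3^n / a n` over greedy coloring satisfies `η_n ≥ (9/10)·(6/5)^{n−1}` and tends
to infinity. -/
theorem odd_cycle_coloring_gain (a : ℕ → ℕ) (h1 : a 1 = 3)
    (hrec : ∀ n, 1 ≤ n → a (n + 1) = 2 * a n + (a n + 1) / 2) :
    (∀ n, 1 ≤ n → 3 * ((5 : ℝ) / 2) ^ (n - 1) ≤ (a n : ℝ) ∧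
      (a n : ℝ) ≤ (10 * ((5 : ℝ) / 2) ^ (n - 1) - 1) / 3) ∧
    (∀ n, 1 ≤ n → (9 / 10 : ℝ) * ((6 : ℝ) / 5) ^ (n - 1) ≤ (3 : ℝ) ^ n / (a n : ℝ)) ∧
    Filter.Tendsto (fun n : ℕ => (3 : ℝ) ^ n / (a n : ℝ)) Filter.atTop Filter.atTop := by
  have hb : ∀ n, 1 ≤ n → 3 * ((5 : ℝ) / 2) ^ (n - 1) ≤ (a n : ℝ) ∧
      (a n : ℝ) ≤ (10 * ((5 : ℝ) / 2) ^ (n - 1) - 1) / 3 := by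
    intro n hn
    induction n, hn using Nat.le_induction with
    | base => simp [h1]; norm_num
    | succ n hn ih =>
      obtain ⟨hl, hu⟩ := ih
      have hrecn := hrec n hn
      have hd1 : a n ≤ 2 * ((a n + 1) / 2) := by omega
      have hd2 : 2 * ((a n + 1) / 2) ≤ a n + 1 := by omega
      have hd1' : (a n : ℝ) ≤ 2 * (((a n + 1) / 2 : ℕ) : ℝ) := by exact_mod_cast hd1
      have hd2' : 2 * (((a n + 1) / 2 : ℕ) : ℝ) ≤ (a n : ℝ) + 1 := by exact_mod_cast hd2
      have hval : (a (n + 1) : ℝ) = 2 * (a n : ℝ) + (((a n + 1) / 2 : ℕ) : ℝ) := by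
        rw [hrecn]; push_cast; ring
      have hk : n - 1 + 1 = n := Nat.sub_add_cancel hn
      have hpow : ((5 : ℝ) / 2) ^ (n + 1 - 1) = ((5 : ℝ) / 2) ^ (n - 1) * (5 / 2) := by
        rw [Nat.add_sub_cancel, ← hk, pow_succ, hk]
      constructor
      · rw [hpow, hval]; nlinarith
      · rw [hpow, hval]; nlinarith
  have hgain : ∀ n, 1 ≤ n → (9 / 10 : ℝ) * ((6 : ℝ) / 5) ^ (n - 1) ≤ (3 : ℝ) ^ n / (a n : ℝ) := by
    intro n hn
    obtain ⟨hl, hu⟩ := hb n hn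
    have hx : (0 : ℝ) < ((5 : ℝ) / 2) ^ (n - 1) := by positivity
    have hpos : (0 : ℝ) < (a n : ℝ) := lt_of_lt_of_le (by positivity) hl
    rw [le_div_iff₀ hpos]
    have hk : n - 1 + 1 = n := Nat.sub_add_cancel hn
    have h3 : (3 : ℝ) ^ n = 3 * (((6 : ℝ) / 5) ^ (n - 1) * ((5 : ℝ) / 2) ^ (n - 1)) := by
      rw [← hk, pow_succ, ← mul_pow]; norm_num; ring
    rw [h3]
    nlinarith [mul_le_mul_of_nonneg_left hu (by positivity : (0:ℝ) ≤ (9/10 : ℝ) * ((6:ℝ)/5) ^ (n-1)), pow_pos (by norm_num : (0:ℝ) < 6/5) (n - 1)]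
  refine ⟨hb, hgain, ?_⟩
  have hg : Filter.Tendsto (fun n : ℕ => (9 / 10 : ℝ) * ((6 : ℝ) / 5) ^ (n - 1))
      Filter.atTop Filter.atTop := by
    apply Filter.Tendsto.const_mul_atTop (by norm_num : (0:ℝ) < 9/10)
    exact (tendsto_pow_atTop_atTop_of_one_lt (by norm_num : (1:ℝ) < 6/5)).comp
      (Filter.tendsto_sub_atTop_nat 1)
  refine Filter.tendsto_atTop_mono' Filter.atTop ?_ hg
  filter_upwards [Filter.eventually_ge_atTop 1] with n hn
  exact hgain n hn
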